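/- Let K be a compact convex subset of a topological vector space V, C a convex subset of a vector space W, and L : K × C → ℝ a function such that L(v, ·) is convex on C for each v ∈ K and L(·, w) is concave and upper semicontinuous on K for each w ∈ C. Then sup_{v ∈ K} inf_{w ∈ C} L(v, w) = inf_{w ∈ C} sup_{v ∈ K} L(v, w). -/

import Mathlib

open Set Finset

/-- Finite-family step of the minimax theorem: if for every `v ∈ K` one of finitely
many `ws i ∈ C` gives value `< c`, then some convex combination `w*` of the `ws i`
gives value `≤ c` uniformly on `K`. Proven via Hahn–Banach separation in `ι → ℝ`. -/
theorem minimax_finite_step {V W : Type*} [AddCommGroup V] [Module ℝ V]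
    [AddCommGroup W] [Module ℝ W]
    {K : Set V} (hKconv : Convex ℝ K) (hKne : K.Nonempty)
    {C : Set W} (hCconv : Convex ℝ C)
    {L : V → W → ℝ}
    (hconv : ∀ v ∈ K, ConvexOn ℝ C (L v))
    (hconc : ∀ w ∈ C, ConcaveOn ℝ K (fun v => L v w))
    {ι : Type*} [Fintype ι] [DecidableEq ι] (ws : ι → W) (hws : ∀ i, ws i ∈ C)
    (c : ℝ) (h : ∀ v ∈ K, ∃ i, L v (ws i) < c) :
    ∃ w ∈ C, ∀ v ∈ K, L v w ≤ c := by
  classical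
  set S : Set (ι → ℝ) := {x | ∃ v ∈ K, ∀ i, x i < L v (ws i)} with hS
  set Q : Set (ι → ℝ) := {x | ∀ i, c ≤ x i} with hQ
  have hSopen : IsOpen S := by
    have : S = ⋃ v ∈ K, ⋂ i, (fun x : ι → ℝ => x i) ⁻¹' Set.Iio (L v (ws i)) := by
      ext x
      simp [hS, Set.mem_iUnion, Set.mem_iInter]
    rw [this]
    exact isOpen_biUnion fun v _ => isOpen_iInter_of_finite fun i =>
      (continuous_apply i).isOpen_preimage _ isOpen_Iio
  have hSconv : Convex ℝ S := by
    rintro x ⟨v, hv, hxv⟩ y ⟨u, hu, hyu⟩ a b ha hb hab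
    refine ⟨a • v + b • u, hKconv hv hu ha hb hab, fun i => ?_⟩
    have hcc := (hconc (ws i) (hws i)).2 hv hu ha hb hab
    simp only [smul_eq_mul] at hcc
    have hx' := hxv i
    have hy' := hyu i
    have hxy : (a • x + b • y) i = a * x i + b * y i := by
      simp [smul_eq_mul]
    rw [hxy]
    rcases lt_or_ge 0 a with hpos | hnp
    · have h1 : a * x i < a * L v (ws i) := by
        exact mul_lt_mul_of_pos_left hx' hpos
      have h2 : b * y i ≤ b * L u (ws i) := mul_le_mul_of_nonneg_left hy'.le hb
      linarith
    · have ha0 : a = 0 := le_antisymm hnp ha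
      have hb1 : b = 1 := by linarith
      rw [ha0, hb1] at hcc ⊢
      simp only [zero_mul, one_mul, zero_add] at hcc ⊢
      linarith
  have hQconv : Convex ℝ Q := by
    rintro x hx y hy a b ha hb hab i
    have h1 : a * c ≤ a * x i := mul_le_mul_of_nonneg_left (hx i) ha
    have h2 : b * c ≤ b * y i := mul_le_mul_of_nonneg_left (hy i) hb
    have : (a • x + b • y) i = a * x i + b * y i := by simp [smul_eq_mul]
    rw [this]
    have hc : a * c + b * c = c := by rw [← add_mul, hab, one_mul]
    linarith
  have hdisj : Disjoint S Q := by
    rw [Set.disjoint_left]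
    rintro x ⟨v, hv, hxv⟩ hxQ
    obtain ⟨i, hi⟩ := h v hv
    have := hxQ i
    have := hxv i
    linarith
  obtain ⟨f, u, hfS, hfQ⟩ := geometric_hahn_banach_open hSconv hSopen hQconv hdisj
  set e : ι → (ι → ℝ) := fun i j => if i = j then (1 : ℝ) else 0 with he
  set lam : ι → ℝ := fun i => f (e i) with hlam
  have key : ∀ x : ι → ℝ, f x = ∑ i, x i * lam i := by
    intro x
    conv_lhs => rw [pi_eq_sum_univ x]
    rw [map_sum]
    refine Finset.sum_congr rfl fun i _ => ?_
    rw [map_smul]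
    simp [hlam, he, smul_eq_mul]
  have hconstQ : (fun _ : ι => c) ∈ Q := fun i => le_refl c
  have hfc : f (fun _ : ι => c) = c * ∑ i, lam i := by
    rw [key]
    rw [Finset.mul_sum]
  have hucfc : u ≤ c * ∑ i, lam i := by
    have := hfQ _ hconstQ
    rwa [hfc] at this
  have hlamnn : ∀ i, 0 ≤ lam i := by
    intro i
    by_contra hneg
    push_neg at hneg
    set t : ℝ := (f (fun _ : ι => c) - u + 1) / (-lam i) with ht
    have htpos : 0 < t := by
      apply div_pos
      · have := hfQ _ hconstQ
        linarith
      · linarith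
    have hqQ : ((fun _ : ι => c) + t • e i) ∈ Q := by
      intro j
      have : ((fun _ : ι => c) + t • e i) j = c + t * (if i = j then (1:ℝ) else 0) := by
        simp [he, smul_eq_mul]
      rw [this]
      rcases eq_or_ne i j with rfl | hij
      · simp; linarith
      · simp [hij]
    have hfq : f ((fun _ : ι => c) + t • e i) = f (fun _ : ι => c) + t * lam i := by
      rw [map_add, map_smul, smul_eq_mul, hlam]
    have hne : lam i ≠ 0 := hneg.ne
    have htl : t * lam i = -(f (fun _ : ι => c) - u + 1) := by
      rw [ht]
      field_simp
    have := hfQ _ hqQ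
    rw [hfq, htl] at this
    linarith
  obtain ⟨v₀, hv₀⟩ := hKne
  have hTpos : 0 < ∑ i, lam i := by
    rcases lt_or_ge 0 (∑ i, lam i) with hT | hT
    · exact hT
    · exfalso
      have hT0 : ∑ i, lam i = 0 :=
        le_antisymm hT (Finset.sum_nonneg fun i _ => hlamnn i)
      have hall : ∀ i ∈ Finset.univ, lam i = 0 :=
        (Finset.sum_eq_zero_iff_of_nonneg fun i _ => hlamnn i).mp hT0
      have hx₀S : (fun i => L v₀ (ws i) - 1) ∈ S :=
        ⟨v₀, hv₀, fun i => by show L v₀ (ws i) - 1 < L v₀ (ws i); linarith⟩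
      have h1 := hfS _ hx₀S
      have h2 := hfQ _ hconstQ
      rw [key] at h1
      rw [hfc, hT0, mul_zero] at h2
      have h3 : ∑ i, ((fun i => L v₀ (ws i) - 1) i) * lam i = 0 :=
        Finset.sum_eq_zero fun i hi => by rw [hall i hi, mul_zero]
      rw [h3] at h1
      linarith
  set T : ℝ := ∑ i, lam i with hT
  set mu : ι → ℝ := fun i => lam i / T with hmu
  have hmunn : ∀ i, 0 ≤ mu i := fun i => div_nonneg (hlamnn i) hTpos.le
  have hmusum : ∑ i, mu i = 1 := by
    rw [hmu, ← Finset.sum_div, ← hT, div_self hTpos.ne']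
  refine ⟨∑ i, mu i • ws i, hCconv.sum_mem (fun i _ => hmunn i) hmusum (fun i _ => hws i),
    fun v hv => ?_⟩
  have hlamsum : ∑ i, lam i * L v (ws i) ≤ c * T := by
    apply le_of_forall_pos_le_add
    intro ε hε
    set δ : ℝ := ε / T with hδ
    have hδpos : 0 < δ := div_pos hε hTpos
    have hxS : (fun i => L v (ws i) - δ) ∈ S := ⟨v, hv, fun i => by show L v (ws i) - δ < L v (ws i); linarith⟩
    have h1 := hfS _ hxS
    rw [key] at h1
    have h2 : ∑ i, ((fun i => L v (ws i) - δ) i) * lam i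
        = ∑ i, lam i * L v (ws i) - δ * T := by
      rw [hT, Finset.mul_sum, ← Finset.sum_sub_distrib]
      refine Finset.sum_congr rfl fun i _ => by ring
    rw [h2] at h1
    have hδT : δ * T = ε := by
      rw [hδ]
      field_simp
    linarith
  have hjensen : L v (∑ i, mu i • ws i) ≤ ∑ i, mu i • L v (ws i) :=
    (hconv v hv).map_sum_le (fun i _ => hmunn i) hmusum (fun i _ => hws i)
  have hfinal : ∑ i, mu i • L v (ws i) ≤ c := by
    have heq : ∑ i, mu i • L v (ws i) = (∑ i, lam i * L v (ws i)) / T := by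
      rw [Finset.sum_div]
      refine Finset.sum_congr rfl fun i _ => ?_
      rw [hmu, smul_eq_mul]
      ring
    rw [heq, div_le_iff₀ hTpos]
    linarith
  linarith


/-- Minimax theorem: if `K` is compact convex, `C` convex, `L(v,·)` convex and
`L(·,w)` concave and upper semicontinuous, then `sup inf = inf sup`. -/
theorem minimax_concave_convex
    (V W : Type*) [AddCommGroup V] [Module ℝ V] [TopologicalSpace V]
    [AddCommGroup W] [Module ℝ W]
    (K : Set V) (hKc : IsCompact K) (hKconv : Convex ℝ K) (hKne : K.Nonempty)
    (C : Set W) (hCconv : Convex ℝ C) (hCne : C.Nonempty)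
    (L : V → W → ℝ)
    (hconv : ∀ v ∈ K, ConvexOn ℝ C (L v))
    (hconc : ∀ w ∈ C, ConcaveOn ℝ K (fun v => L v w))
    (husc : ∀ w ∈ C, UpperSemicontinuousOn (fun v => L v w) K) :
    (⨆ v : K, ⨅ w : C, ((L v w : ℝ) : EReal))
      = ⨅ w : C, ⨆ v : K, ((L v w : ℝ) : EReal) := by
  classical
  haveI : Nonempty K := hKne.to_subtype
  haveI : Nonempty C := hCne.to_subtype
  refine le_antisymm (iSup_iInf_le_iInf_iSup _) ?_
  by_contra hlt
  push_neg at hlt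
  obtain ⟨c, hc1, hc2⟩ := EReal.exists_between_coe_real hlt
  have hWv : ∀ v, v ∈ K → ∃ w ∈ C, L v w < c := by
    intro v hv
    have h1 : (⨅ w : C, ((L v w : ℝ) : EReal)) < (c : ℝ) :=
      lt_of_le_of_lt
        (le_iSup (fun v : K => ⨅ w : C, ((L v.1 w : ℝ) : EReal)) ⟨v, hv⟩) hc1
    obtain ⟨w, hw⟩ := iInf_lt_iff.mp h1
    exact ⟨w, w.2, EReal.coe_lt_coe_iff.mp hw⟩
  choose wv hwvC hwvlt using hWv
  have hU : ∀ v (hv : v ∈ K), ∃ U ∈ nhds v, ∀ u ∈ U, u ∈ K → L u (wv v hv) < c := by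
    intro v hv
    have hev := husc (wv v hv) (hwvC v hv) v hv c (hwvlt v hv)
    rw [eventually_nhdsWithin_iff] at hev
    exact ⟨_, hev, fun u hu hk => hu hk⟩
  choose U hUnhds hUprop using hU
  obtain ⟨t, ht⟩ := hKc.elim_nhds_subcover' U hUnhds
  obtain ⟨wstar, hwstarC, hbound⟩ :=
    minimax_finite_step hKconv hKne hCconv hconv hconc
      (ι := {x // x ∈ t}) (fun i => wv i.1.1 i.1.2) (fun i => hwvC _ _) c
      (by
        intro v hv
        have hvmem := ht hv
        rw [Set.mem_iUnion₂] at hvmem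
        obtain ⟨x, hxt, hvU⟩ := hvmem
        exact ⟨⟨x, hxt⟩, hUprop x.1 x.2 v hvU hv⟩)
  have h3 : (⨅ w : C, ⨆ v : K, ((L v w : ℝ) : EReal))
      ≤ ⨆ v : K, ((L v.1 wstar : ℝ) : EReal) :=
    iInf_le (fun w : C => ⨆ v : K, ((L v.1 w : ℝ) : EReal)) ⟨wstar, hwstarC⟩
  have h4 : (⨆ v : K, ((L v.1 wstar : ℝ) : EReal)) ≤ ((c : ℝ) : EReal) :=
    iSup_le fun v => EReal.coe_le_coe_iff.mpr (hbound v v.2)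
  exact absurd (h3.trans h4) (not_le.mpr hc2)
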